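/- Any deterministic finite automaton consistent with an observation table has at least as many states as the table has distinct rows: let Σ be a finite alphabet, let S, E ⊆ Σ* be finite sets of words, let T : Σ* → Bool be a function, and define row(s) : E → Bool by row(s)(e) = T(s·e). Suppose M is a deterministic finite automaton over Σ with a finite state type such that for every s ∈ S ∪ S·Σ and every e ∈ E, the word s·e is accepted by M if and only if T(s·e) = true. Then the cardinality of the state type of M is at least the cardinality of the set {row(s) : s ∈ S}. -/
import Mathlib


/-- Any deterministic finite automaton consistent with an observation
table has at least as many states as the table has distinct rows: if `Σ` is a finite
alphabet, `S, E ⊆ Σ*` are finite sets of words, `T : Σ* → Bool`, `row(s)(e) = T(s·e)`,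
and `M` is a DFA over `Σ` with finite state type such that for every `s ∈ S ∪ S·Σ` and
every `e ∈ E` the word `s·e` is accepted by `M` iff `T(s·e) = true`, then the number of
states of `M` is at least the number of distinct rows `{row(s) : s ∈ S}`. -/
theorem card_rows_le_card_states {α Q : Type} [Fintype α] [Fintype Q]
    (M : DFA α Q) (S E : Finset (List α)) (T : List α → Bool)
    (hM : ∀ s : List α, (s ∈ S ∨ ∃ t ∈ S, ∃ a : α, s = t ++ [a]) →
      ∀ e ∈ E, (s ++ e ∈ M.accepts ↔ T (s ++ e) = true)) :
    Set.ncard {r : {e // e ∈ E} → Bool | ∃ s ∈ S, (fun e : {e // e ∈ E} => T (s ++ e.1)) = r}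
      ≤ Fintype.card Q := by
  classical
  set f : Q → ({e // e ∈ E} → Bool) :=
    fun q e => decide (M.evalFrom q e.1 ∈ M.accept) with hf
  have hsub : {r : {e // e ∈ E} → Bool | ∃ s ∈ S, (fun e : {e // e ∈ E} => T (s ++ e.1)) = r}
      ⊆ Set.range f := by
    rintro r ⟨s, hs, rfl⟩
    refine ⟨M.eval s, ?_⟩
    funext e
    have h := hM s (Or.inl hs) e.1 e.2
    have hacc : (s ++ e.1 ∈ M.accepts) ↔ (M.evalFrom (M.eval s) e.1 ∈ M.accept) := by
      rw [DFA.mem_accepts, DFA.eval, DFA.evalFrom_of_append]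
    simp only [hf]
    have key : T (s ++ e.1) = true ↔ M.evalFrom (M.eval s) e.1 ∈ M.accept :=
      h.symm.trans hacc
    by_cases hc : T (s ++ e.1) = true
    · simp [key.mp hc, hc]
    · simp only [Bool.not_eq_true] at hc
      have : M.evalFrom (M.eval s) e.1 ∉ M.accept := fun hx => by
        simp [key.mpr hx] at hc
      simp [hc, this]
  calc Set.ncard _ ≤ (Set.range f).ncard :=
        Set.ncard_le_ncard hsub (Set.finite_range f)
    _ ≤ Fintype.card Q := by
        rw [← Set.image_univ]
        calc (f '' Set.univ).ncard ≤ (Set.univ : Set Q).ncard := Set.ncard_image_le Set.univ.toFinite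
          _ = Fintype.card Q := by simp [Set.ncard_univ, Nat.card_eq_fintype_card]
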